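/- The paperclip Schwarz function S(z,t) = Log((e^t − e^z)/(1 − e^{t+z})) (principal complex logarithm) satisfies the curve-shortening Schwarz function equation: for every (z,t) ∈ ℂ × ℝ such that e^t − e^z ≠ 0, 1 − e^{t+z} ≠ 0, and the quotient (e^t − e^z)/(1 − e^{t+z}) does not lie in (−∞,0], one has S_z = e^z(e^{2t} − 1)/((e^t − e^z)(1 − e^{t+z})), S_t = e^t(1 − e^{2z})/((e^t − e^z)(1 − e^{t+z})), and S_t S_z = S_zz. -/

import Mathlib

/-- The paperclip Schwarz function `S(z,t) = Log((e^t − e^z)/(1 − e^{t+z}))`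
satisfies the curve-shortening Schwarz function equation `S_t S_z = S_zz`. -/
theorem paperclip_schwarz (z : ℂ) (t : ℝ)
    (hA : Complex.exp (t : ℂ) - Complex.exp z ≠ 0)
    (hB : 1 - Complex.exp ((t : ℂ) + z) ≠ 0)
    (hslit : ∀ x : ℝ, x ≤ 0 →
      (Complex.exp (t : ℂ) - Complex.exp z) / (1 - Complex.exp ((t : ℂ) + z)) ≠ (x : ℂ)) :
    HasDerivAt
      (fun w : ℂ =>
        Complex.log ((Complex.exp (t : ℂ) - Complex.exp w) / (1 - Complex.exp ((t : ℂ) + w))))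
      (Complex.exp z * (Complex.exp (2 * (t : ℂ)) - 1) /
        ((Complex.exp (t : ℂ) - Complex.exp z) * (1 - Complex.exp ((t : ℂ) + z)))) z ∧
    HasDerivAt
      (fun s : ℝ =>
        Complex.log ((Complex.exp (s : ℂ) - Complex.exp z) / (1 - Complex.exp ((s : ℂ) + z))))
      (Complex.exp (t : ℂ) * (1 - Complex.exp (2 * z)) /
        ((Complex.exp (t : ℂ) - Complex.exp z) * (1 - Complex.exp ((t : ℂ) + z)))) t ∧
    HasDerivAt
      (fun w : ℂ =>
        Complex.exp w * (Complex.exp (2 * (t : ℂ)) - 1) /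
          ((Complex.exp (t : ℂ) - Complex.exp w) * (1 - Complex.exp ((t : ℂ) + w))))
      ((Complex.exp (t : ℂ) * (1 - Complex.exp (2 * z)) /
          ((Complex.exp (t : ℂ) - Complex.exp z) * (1 - Complex.exp ((t : ℂ) + z)))) *
        (Complex.exp z * (Complex.exp (2 * (t : ℂ)) - 1) /
          ((Complex.exp (t : ℂ) - Complex.exp z) * (1 - Complex.exp ((t : ℂ) + z))))) z := by
  set T : ℂ := Complex.exp (t : ℂ) with hT
  set Z : ℂ := Complex.exp z with hZ
  have hTZ : Complex.exp ((t : ℂ) + z) = T * Z := Complex.exp_add _ _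
  have h2t : Complex.exp (2 * (t : ℂ)) = T * T := by
    rw [two_mul, Complex.exp_add]
  have h2z : Complex.exp (2 * z) = Z * Z := by
    rw [two_mul, Complex.exp_add]
  have hT0 : T ≠ 0 := Complex.exp_ne_zero _
  have hZ0 : Z ≠ 0 := Complex.exp_ne_zero _
  -- slit plane membership
  have hmem : (T - Z) / (1 - Complex.exp ((t : ℂ) + z)) ∈ Complex.slitPlane := by
    rw [Complex.mem_slitPlane_iff]
    by_contra h
    push_neg at h
    obtain ⟨h1, h2⟩ := h
    set q : ℂ := (T - Z) / (1 - Complex.exp ((t : ℂ) + z)) with hq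
    exact hslit q.re h1 (Complex.ext rfl (by simpa using h2))
  -- derivative of A(w) = T - exp w at z
  have dA : HasDerivAt (fun w : ℂ => T - Complex.exp w) (-Z) z := by
    exact ((hasDerivAt_const z T).sub (Complex.hasDerivAt_exp z)).congr_deriv (by simp [hZ])
  -- derivative of B(w) = 1 - exp (t + w) at z
  have dE : HasDerivAt (fun w : ℂ => Complex.exp ((t : ℂ) + w)) (T * Z) z := by
    have h1 : HasDerivAt (fun w : ℂ => (t : ℂ) + w) 1 z := by
      simpa using (hasDerivAt_id z).const_add (t : ℂ)
    exact ((Complex.hasDerivAt_exp ((t : ℂ) + z)).comp z h1).congr_deriv (by simp [hTZ])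
  have dB : HasDerivAt (fun w : ℂ => 1 - Complex.exp ((t : ℂ) + w)) (-(T * Z)) z := by
    exact ((hasDerivAt_const z (1 : ℂ)).sub dE).congr_deriv (by simp)
  have hBval : (1 : ℂ) - Complex.exp ((t : ℂ) + z) = 1 - T * Z := by rw [hTZ]
  have hB' : (1 : ℂ) - T * Z ≠ 0 := hBval ▸ hB
  -- quotient derivative in w
  have dQ : HasDerivAt
      (fun w : ℂ => (T - Complex.exp w) / (1 - Complex.exp ((t : ℂ) + w)))
      ((-Z * (1 - T * Z) - (T - Z) * (-(T * Z))) / (1 - T * Z) ^ 2) z := by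
    exact (dA.div dB hB).congr_deriv (by simp only [hBval, hZ])
  refine ⟨?_, ?_, ?_⟩
  · have := dQ.clog hmem
    convert this using 1
    rw [hBval, h2t, ← hZ]
    field_simp
    ring
  · -- time derivative: first as a complex derivative, then comp_ofReal
    have dAc : HasDerivAt (fun s : ℂ => Complex.exp s - Z) T (t : ℂ) := by
      simpa using (Complex.hasDerivAt_exp (t : ℂ)).sub_const Z
    have dEc : HasDerivAt (fun s : ℂ => Complex.exp (s + z)) (T * Z) (t : ℂ) := by
      have h1 : HasDerivAt (fun s : ℂ => s + z) 1 (t : ℂ) := by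
        simpa using (hasDerivAt_id (t : ℂ)).add_const z
      exact ((Complex.hasDerivAt_exp ((t : ℂ) + z)).comp (t : ℂ) h1).congr_deriv (by simp [hTZ])
    have dBc : HasDerivAt (fun s : ℂ => 1 - Complex.exp (s + z)) (-(T * Z)) (t : ℂ) := by
      exact ((hasDerivAt_const (t : ℂ) (1 : ℂ)).sub dEc).congr_deriv (by simp)
    have dQc : HasDerivAt
        (fun s : ℂ => (Complex.exp s - Z) / (1 - Complex.exp (s + z)))
        ((T * (1 - T * Z) - (T - Z) * (-(T * Z))) / (1 - T * Z) ^ 2) (t : ℂ) := by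
      exact (dAc.div dBc hB).congr_deriv (by simp only [hBval, hT])
    have hlog := dQc.clog (by simpa [hZ] using hmem)
    have := hlog.comp_ofReal
    convert this using 1
    rw [hBval, h2z, ← hT]
    field_simp
    ring
  · -- second derivative: quotient rule for N/D
    have dN : HasDerivAt (fun w : ℂ => Complex.exp w * (Complex.exp (2 * (t : ℂ)) - 1))
        (Z * (Complex.exp (2 * (t : ℂ)) - 1)) z := by
      simpa using (Complex.hasDerivAt_exp z).mul_const (Complex.exp (2 * (t : ℂ)) - 1)
    have dD : HasDerivAt
        (fun w : ℂ => (T - Complex.exp w) * (1 - Complex.exp ((t : ℂ) + w)))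
        (-Z * (1 - T * Z) + (T - Z) * (-(T * Z))) z := by
      exact (dA.mul dB).congr_deriv (by simp only [hBval, hZ])
    have hD0 : (T - Z) * (1 - T * Z) ≠ 0 := mul_ne_zero hA hB'
    have := dN.div dD (by rw [hBval]; exact hD0)
    refine this.congr_deriv ?_
    rw [hBval, h2t, h2z, ← hZ]
    field_simp
    ring
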